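/- For a Lipschitz function φ on Z_p, the norm of the commutator satisfies ‖[D, π(φ)]‖² = sup over n ≥ 0 and 0 ≤ k < p^n of (1/p) Σ_{i=1}^{p−1} |φ(k) − φ(k + i p^n)|² / p^{−2n}. -/

import Mathlib

/-- The vertex `k + i·p^n` viewed in level `n+1` of the `p`-adic tree. -/
def treeIdx (p n : ℕ) (k : Fin (p ^ n)) (i : Fin p) : Fin (p ^ (n + 1)) :=
  ⟨(k : ℕ) + (i : ℕ) * p ^ n, by
    have hk := k.2
    have hi := i.2
    calc (k : ℕ) + (i : ℕ) * p ^ n < ((i : ℕ) + 1) * p ^ n := by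
          rw [Nat.add_mul, one_mul]; omega
      _ ≤ p * p ^ n := Nat.mul_le_mul_right _ hi
      _ = p ^ (n + 1) := by ring⟩

set_option maxHeartbeats 1000000

lemma treeIdx_pair_inj {p n : ℕ} (hp0 : 0 < p) {k k' : Fin (p ^ n)} {i i' : Fin p}
    (h : treeIdx p n k i = treeIdx p n k' i') : k = k' ∧ i = i' := by
  have hval : (k : ℕ) + (i : ℕ) * p ^ n = (k' : ℕ) + (i' : ℕ) * p ^ n :=
    congrArg Fin.val h
  have hpn : 0 < p ^ n := Nat.pow_pos hp0
  have hk : (k : ℕ) = k' := by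
    have h1 : ((k : ℕ) + (i : ℕ) * p ^ n) % p ^ n = (k : ℕ) := by
      rw [Nat.add_mul_mod_self_right, Nat.mod_eq_of_lt k.2]
    have h2 : ((k' : ℕ) + (i' : ℕ) * p ^ n) % p ^ n = (k' : ℕ) := by
      rw [Nat.add_mul_mod_self_right, Nat.mod_eq_of_lt k'.2]
    rw [← h1, ← h2, hval]
  have hi : (i : ℕ) = i' := by
    have : (i : ℕ) * p ^ n = (i' : ℕ) * p ^ n := by omega
    exact Nat.eq_of_mul_eq_mul_right hpn this
  exact ⟨Fin.ext hk, Fin.ext hi⟩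

lemma treeIdx_sigma_inj (p : ℕ) (hp0 : 0 < p) :
    Function.Injective (fun q : (Σ n : ℕ, Fin (p ^ n)) × Fin p =>
      (⟨q.1.1 + 1, treeIdx p q.1.1 q.1.2 q.2⟩ : Σ n : ℕ, Fin (p ^ n))) := by
  rintro ⟨⟨n, k⟩, i⟩ ⟨⟨m, k'⟩, i'⟩ h
  simp only at h
  have hnm : n = m := by
    have := congrArg Sigma.fst h
    simpa using this
  subst hnm
  have h2 : treeIdx p n k i = treeIdx p n k' i' := by
    have := (Sigma.mk.inj_iff.mp h).2
    exact eq_of_heq this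
  obtain ⟨h3, h4⟩ := treeIdx_pair_inj hp0 h2
  simp [h3, h4]

/-- For a Lipschitz function `φ` on `ℤ_p`,
`‖[D,π(φ)]‖² = sup_{n, 0≤k<p^n} (1/p) ∑_{i=1}^{p-1} |φ(k) - φ(k+ip^n)|² / p^{-2n}`:
the right-hand side is the least constant `M ≥ 0` with
`‖[D,π(φ)]g‖² ≤ M ‖g‖²` for all `g` in the weighted `ℓ²` space. -/
theorem stmt17 (p : ℕ) [hp : Fact p.Prime] (φ : C(ℤ_[p], ℂ))
    (hφ : ∃ C : ℝ, ∀ x y : ℤ_[p], ‖φ x - φ y‖ ≤ C * ‖x - y‖) :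
    IsLeast {M : ℝ | 0 ≤ M ∧ ∀ g : ∀ n : ℕ, Fin (p ^ n) → ℂ,
        Summable (fun x : Σ n : ℕ, Fin (p ^ n) => ‖g x.1 x.2‖ ^ 2 * ((p : ℝ) ^ x.1)⁻¹) →
        ∑' x : Σ n : ℕ, Fin (p ^ n),
            ‖((p : ℂ) ^ x.1 / (p : ℂ)) * ∑ i : Fin p,
                (φ (((x.2 : ℕ) : ℤ_[p])) - φ ((((x.2 : ℕ) + (i : ℕ) * p ^ x.1 : ℕ)) : ℤ_[p])) *
                  g (x.1 + 1) (treeIdx p x.1 x.2 i)‖ ^ 2 * ((p : ℝ) ^ x.1)⁻¹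
          ≤ M * ∑' x : Σ n : ℕ, Fin (p ^ n), ‖g x.1 x.2‖ ^ 2 * ((p : ℝ) ^ x.1)⁻¹}
      (⨆ x : Σ n : ℕ, Fin (p ^ n),
        (p : ℝ)⁻¹ * ∑ i ∈ Finset.Icc 1 (p - 1),
          ‖φ (((x.2 : ℕ) : ℤ_[p])) - φ ((((x.2 : ℕ) + i * p ^ x.1 : ℕ)) : ℤ_[p])‖ ^ 2 *
            (p : ℝ) ^ (2 * x.1)) := by
  classical
  obtain ⟨C₀, hC₀⟩ := hφ
  have hp2 : 2 ≤ p := hp.out.two_le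
  have hp0 : 0 < p := by omega
  have hpR : (0:ℝ) < p := by exact_mod_cast hp0
  have hpR0 : (p:ℝ) ≠ 0 := ne_of_gt hpR
  set C := max C₀ 0 with hCdef
  have hC0 : 0 ≤ C := le_max_right _ _
  have hCφ : ∀ x y : ℤ_[p], ‖φ x - φ y‖ ≤ C * ‖x - y‖ := fun x y =>
    (hC₀ x y).trans (mul_le_mul_of_nonneg_right (le_max_left _ _) (norm_nonneg _))
  -- the p-adic distance bound
  have hdiff : ∀ (n k i : ℕ),
      ‖φ ((k : ℤ_[p])) - φ (((k + i * p ^ n : ℕ) : ℤ_[p]))‖ ≤ C * ((p:ℝ)^n)⁻¹ := by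
    intro n k i
    have h2 : ‖(k : ℤ_[p]) - ((k + i * p ^ n : ℕ) : ℤ_[p])‖ ≤ ((p:ℝ)^n)⁻¹ := by
      have h1 : ((k + i * p ^ n : ℕ) : ℤ_[p]) = (k:ℤ_[p]) + (i:ℤ_[p]) * (p:ℤ_[p])^n := by
        push_cast; ring
      rw [h1, show (k:ℤ_[p]) - ((k:ℤ_[p]) + (i:ℤ_[p]) * (p:ℤ_[p])^n)
            = -((i:ℤ_[p]) * (p:ℤ_[p])^n) by ring, norm_neg]
      calc ‖(i:ℤ_[p]) * (p:ℤ_[p])^n‖ = ‖(i:ℤ_[p])‖ * ‖(p:ℤ_[p])^n‖ := norm_mul _ _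
        _ ≤ 1 * ‖(p:ℤ_[p])^n‖ :=
            mul_le_mul_of_nonneg_right (PadicInt.norm_le_one _) (norm_nonneg _)
        _ = ((p:ℝ)^n)⁻¹ := by
            rw [one_mul, PadicInt.norm_p_pow]
            rw [zpow_neg, zpow_natCast]
    calc ‖φ ((k : ℤ_[p])) - φ (((k + i * p ^ n : ℕ) : ℤ_[p]))‖
        ≤ C * ‖(k : ℤ_[p]) - ((k + i * p ^ n : ℕ) : ℤ_[p])‖ := hCφ _ _
      _ ≤ C * ((p:ℝ)^n)⁻¹ := mul_le_mul_of_nonneg_left h2 hC0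
  set Φ : (Σ n : ℕ, Fin (p ^ n)) → ℝ := fun x =>
    (p : ℝ)⁻¹ * ∑ i ∈ Finset.Icc 1 (p - 1),
      ‖φ (((x.2 : ℕ) : ℤ_[p])) - φ ((((x.2 : ℕ) + i * p ^ x.1 : ℕ)) : ℤ_[p])‖ ^ 2 *
        (p : ℝ) ^ (2 * x.1) with hΦdef
  have hΦnonneg : ∀ x, 0 ≤ Φ x := by
    intro x
    apply mul_nonneg (by positivity)
    exact Finset.sum_nonneg fun i _ => by positivity
  have hbdd : BddAbove (Set.range Φ) := by
    refine ⟨C^2, ?_⟩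
    rintro _ ⟨x, rfl⟩
    obtain ⟨n, k⟩ := x
    have hsum : ∑ i ∈ Finset.Icc 1 (p - 1),
        ‖φ (((k : ℕ) : ℤ_[p])) - φ ((((k : ℕ) + i * p ^ n : ℕ)) : ℤ_[p])‖ ^ 2 *
          (p : ℝ) ^ (2 * n) ≤ (p - 1 : ℕ) * C ^ 2 := by
      have : ∀ i ∈ Finset.Icc 1 (p-1),
          ‖φ (((k : ℕ) : ℤ_[p])) - φ ((((k : ℕ) + i * p ^ n : ℕ)) : ℤ_[p])‖ ^ 2 *
            (p : ℝ) ^ (2 * n) ≤ C ^ 2 := by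
        intro i _
        have h1 := hdiff n (k:ℕ) i
        have h2 : ‖φ (((k : ℕ) : ℤ_[p])) - φ ((((k : ℕ) + i * p ^ n : ℕ)) : ℤ_[p])‖ ^ 2
            ≤ (C * ((p:ℝ)^n)⁻¹) ^ 2 := by
          apply pow_le_pow_left₀ (norm_nonneg _) h1
        calc ‖φ (((k : ℕ) : ℤ_[p])) - φ ((((k : ℕ) + i * p ^ n : ℕ)) : ℤ_[p])‖ ^ 2 *
              (p : ℝ) ^ (2 * n)
            ≤ (C * ((p:ℝ)^n)⁻¹) ^ 2 * (p : ℝ) ^ (2 * n) :=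
              mul_le_mul_of_nonneg_right h2 (by positivity)
          _ = C ^ 2 := by
              rw [pow_mul']
              field_simp
      calc ∑ i ∈ Finset.Icc 1 (p - 1),
            ‖φ (((k : ℕ) : ℤ_[p])) - φ ((((k : ℕ) + i * p ^ n : ℕ)) : ℤ_[p])‖ ^ 2 *
              (p : ℝ) ^ (2 * n)
          ≤ (Finset.Icc 1 (p-1)).card • (C ^ 2) := Finset.sum_le_card_nsmul _ _ _ this
        _ = (p - 1 : ℕ) * C ^ 2 := by
            rw [Nat.card_Icc, nsmul_eq_mul]
            norm_num
    calc Φ ⟨n, k⟩ ≤ (p:ℝ)⁻¹ * ((p - 1 : ℕ) * C ^ 2) := by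
          apply mul_le_mul_of_nonneg_left hsum (by positivity)
      _ ≤ (p:ℝ)⁻¹ * ((p : ℝ) * C ^ 2) := by
          apply mul_le_mul_of_nonneg_left _ (by positivity)
          apply mul_le_mul_of_nonneg_right _ (by positivity)
          calc ((p - 1 : ℕ) : ℝ) ≤ (p : ℕ) := by exact_mod_cast Nat.sub_le p 1
            _ = (p : ℝ) := by norm_num
      _ = C ^ 2 := by field_simp
  have hne : Nonempty (Σ n : ℕ, Fin (p ^ n)) := ⟨⟨0, ⟨0, by positivity⟩⟩⟩
  have hS : ∀ x, Φ x ≤ ⨆ y, Φ y := fun x => le_ciSup hbdd x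
  have hS0 : 0 ≤ ⨆ y, Φ y := le_trans (hΦnonneg hne.some) (hS hne.some)
  -- the conversion between `Fin p` sums and `Icc 1 (p-1)` sums of squared differences
  have hAconv : ∀ (n : ℕ) (k : Fin (p ^ n)),
      (∑ i : Fin p, ‖φ (((k : ℕ) : ℤ_[p])) -
          φ ((((k : ℕ) + (i : ℕ) * p ^ n : ℕ)) : ℤ_[p])‖ ^ 2)
      = ∑ i ∈ Finset.Icc 1 (p - 1),
          ‖φ (((k : ℕ) : ℤ_[p])) - φ ((((k : ℕ) + i * p ^ n : ℕ)) : ℤ_[p])‖ ^ 2 := by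
    intro n k
    rw [Fin.sum_univ_eq_sum_range
      (fun i => ‖φ (((k : ℕ) : ℤ_[p])) - φ ((((k : ℕ) + i * p ^ n : ℕ)) : ℤ_[p])‖ ^ 2) p]
    symm
    apply Finset.sum_subset
    · intro i hi
      simp only [Finset.mem_Icc] at hi
      simp only [Finset.mem_range]
      omega
    · intro i hir hinot
      simp only [Finset.mem_Icc] at hinot
      simp only [Finset.mem_range] at hir
      have : i = 0 := by omega
      subst this
      simp
  constructor
  · refine ⟨hS0, ?_⟩
    intro g hg
    -- termwise bound via Cauchy-Schwarz
    have hterm : ∀ x : Σ n : ℕ, Fin (p ^ n),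
        ‖((p : ℂ) ^ x.1 / (p : ℂ)) * ∑ i : Fin p,
            (φ (((x.2 : ℕ) : ℤ_[p])) - φ ((((x.2 : ℕ) + (i : ℕ) * p ^ x.1 : ℕ)) : ℤ_[p])) *
              g (x.1 + 1) (treeIdx p x.1 x.2 i)‖ ^ 2 * ((p : ℝ) ^ x.1)⁻¹
        ≤ (⨆ y, Φ y) * ∑ i : Fin p,
            ‖g (x.1 + 1) (treeIdx p x.1 x.2 i)‖ ^ 2 * ((p : ℝ) ^ (x.1 + 1))⁻¹ := by
      rintro ⟨n, k⟩
      set c : Fin p → ℂ := fun i =>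
        φ (((k : ℕ) : ℤ_[p])) - φ ((((k : ℕ) + (i : ℕ) * p ^ n : ℕ)) : ℤ_[p]) with hc
      set G : Fin p → ℂ := fun i => g (n + 1) (treeIdx p n k i) with hGdef
      have hnorm : ‖((p : ℂ) ^ n / (p : ℂ))‖ = (p:ℝ)^n / p := by
        rw [norm_div, norm_pow, Complex.norm_natCast]
      have hCS : ‖∑ i : Fin p, c i * G i‖ ^ 2
          ≤ (∑ i : Fin p, ‖c i‖ ^ 2) * (∑ i : Fin p, ‖G i‖ ^ 2) := by
        have h1 : ‖∑ i : Fin p, c i * G i‖ ≤ ∑ i : Fin p, ‖c i‖ * ‖G i‖ :=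
          (norm_sum_le _ _).trans (le_of_eq (Finset.sum_congr rfl fun i _ => norm_mul _ _))
        calc ‖∑ i : Fin p, c i * G i‖ ^ 2 ≤ (∑ i : Fin p, ‖c i‖ * ‖G i‖) ^ 2 :=
              pow_le_pow_left₀ (norm_nonneg _) h1 2
          _ ≤ _ := Finset.sum_mul_sq_le_sq_mul_sq _ _ _
      have hmain : ‖((p : ℂ) ^ n / (p : ℂ)) * ∑ i : Fin p, c i * G i‖ ^ 2 * ((p : ℝ) ^ n)⁻¹
          ≤ Φ ⟨n, k⟩ * ∑ i : Fin p, ‖G i‖ ^ 2 * ((p : ℝ) ^ (n + 1))⁻¹ := by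
        have e1 : ‖((p : ℂ) ^ n / (p : ℂ)) * ∑ i : Fin p, c i * G i‖ ^ 2
            = ((p:ℝ)^n / p) ^ 2 * ‖∑ i : Fin p, c i * G i‖ ^ 2 := by
          rw [norm_mul, mul_pow, hnorm]
        rw [e1]
        calc ((p:ℝ)^n / p) ^ 2 * ‖∑ i : Fin p, c i * G i‖ ^ 2 * ((p : ℝ) ^ n)⁻¹
            ≤ ((p:ℝ)^n / p) ^ 2 * ((∑ i : Fin p, ‖c i‖ ^ 2) * (∑ i : Fin p, ‖G i‖ ^ 2)) *
                ((p : ℝ) ^ n)⁻¹ := by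
              apply mul_le_mul_of_nonneg_right _ (by positivity)
              exact mul_le_mul_of_nonneg_left hCS (by positivity)
          _ = Φ ⟨n, k⟩ * ∑ i : Fin p, ‖G i‖ ^ 2 * ((p : ℝ) ^ (n + 1))⁻¹ := by
              rw [hΦdef]
              simp only
              rw [← Finset.sum_mul, ← Finset.sum_mul, ← hAconv n k]
              rw [pow_mul', pow_succ]
              simp only [hc]
              field_simp
              ring
      calc ‖((p : ℂ) ^ n / (p : ℂ)) * ∑ i : Fin p, c i * G i‖ ^ 2 * ((p : ℝ) ^ n)⁻¹
          ≤ Φ ⟨n, k⟩ * ∑ i : Fin p, ‖G i‖ ^ 2 * ((p : ℝ) ^ (n + 1))⁻¹ := hmain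
        _ ≤ (⨆ y, Φ y) * ∑ i : Fin p, ‖G i‖ ^ 2 * ((p : ℝ) ^ (n + 1))⁻¹ := by
            apply mul_le_mul_of_nonneg_right (hS _)
            exact Finset.sum_nonneg fun i _ => by positivity
    -- summability of the majorant
    have hsum_h : Summable (fun x : Σ n : ℕ, Fin (p ^ n) =>
        ∑ i : Fin p, ‖g (x.1 + 1) (treeIdx p x.1 x.2 i)‖ ^ 2 * ((p : ℝ) ^ (x.1 + 1))⁻¹) := by
      apply summable_sum
      intro i _
      have hinj : Function.Injective (fun x : Σ n : ℕ, Fin (p ^ n) =>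
          (⟨x.1 + 1, treeIdx p x.1 x.2 i⟩ : Σ n : ℕ, Fin (p ^ n))) := by
        intro x y hxy
        have := treeIdx_sigma_inj p hp0 (a₁ := (x, i)) (a₂ := (y, i)) hxy
        exact congrArg Prod.fst this
      exact (hg.comp_injective hinj).congr (fun _ => rfl)
    have hsum_Sh : Summable (fun x : Σ n : ℕ, Fin (p ^ n) => (⨆ y, Φ y) *
        ∑ i : Fin p, ‖g (x.1 + 1) (treeIdx p x.1 x.2 i)‖ ^ 2 * ((p : ℝ) ^ (x.1 + 1))⁻¹) :=
      hsum_h.mul_left _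
    have hsumT : Summable (fun x : Σ n : ℕ, Fin (p ^ n) =>
        ‖((p : ℂ) ^ x.1 / (p : ℂ)) * ∑ i : Fin p,
            (φ (((x.2 : ℕ) : ℤ_[p])) - φ ((((x.2 : ℕ) + (i : ℕ) * p ^ x.1 : ℕ)) : ℤ_[p])) *
              g (x.1 + 1) (treeIdx p x.1 x.2 i)‖ ^ 2 * ((p : ℝ) ^ x.1)⁻¹) :=
      Summable.of_nonneg_of_le (fun x => by positivity) hterm hsum_Sh
    have hWprod : Summable (fun q : (Σ n : ℕ, Fin (p ^ n)) × Fin p =>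
        ‖g (q.1.1 + 1) (treeIdx p q.1.1 q.1.2 q.2)‖ ^ 2 * ((p : ℝ) ^ (q.1.1 + 1))⁻¹) :=
      (hg.comp_injective (treeIdx_sigma_inj p hp0)).congr (fun _ => rfl)
    have htsum_h : (∑' x : Σ n : ℕ, Fin (p ^ n),
        ∑ i : Fin p, ‖g (x.1 + 1) (treeIdx p x.1 x.2 i)‖ ^ 2 * ((p : ℝ) ^ (x.1 + 1))⁻¹)
        ≤ ∑' x : Σ n : ℕ, Fin (p ^ n), ‖g x.1 x.2‖ ^ 2 * ((p : ℝ) ^ x.1)⁻¹ := by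
      have heq : (∑' x : Σ n : ℕ, Fin (p ^ n),
          ∑ i : Fin p, ‖g (x.1 + 1) (treeIdx p x.1 x.2 i)‖ ^ 2 * ((p : ℝ) ^ (x.1 + 1))⁻¹)
          = ∑' q : (Σ n : ℕ, Fin (p ^ n)) × Fin p,
              ‖g (q.1.1 + 1) (treeIdx p q.1.1 q.1.2 q.2)‖ ^ 2 * ((p : ℝ) ^ (q.1.1 + 1))⁻¹ := by
        rw [hWprod.tsum_prod' (fun b => Summable.of_finite)]
        exact tsum_congr fun x => (tsum_fintype _).symm
      rw [heq]
      exact hWprod.tsum_le_tsum_of_inj _ (treeIdx_sigma_inj p hp0)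
        (fun c _ => by positivity) (fun q => le_rfl) hg
    calc (∑' x : Σ n : ℕ, Fin (p ^ n),
          ‖((p : ℂ) ^ x.1 / (p : ℂ)) * ∑ i : Fin p,
              (φ (((x.2 : ℕ) : ℤ_[p])) - φ ((((x.2 : ℕ) + (i : ℕ) * p ^ x.1 : ℕ)) : ℤ_[p])) *
                g (x.1 + 1) (treeIdx p x.1 x.2 i)‖ ^ 2 * ((p : ℝ) ^ x.1)⁻¹)
        ≤ ∑' x : Σ n : ℕ, Fin (p ^ n), (⨆ y, Φ y) *
            ∑ i : Fin p, ‖g (x.1 + 1) (treeIdx p x.1 x.2 i)‖ ^ 2 * ((p : ℝ) ^ (x.1 + 1))⁻¹ :=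
          hsumT.tsum_le_tsum hterm hsum_Sh
      _ = (⨆ y, Φ y) * ∑' x : Σ n : ℕ, Fin (p ^ n),
            ∑ i : Fin p, ‖g (x.1 + 1) (treeIdx p x.1 x.2 i)‖ ^ 2 * ((p : ℝ) ^ (x.1 + 1))⁻¹ :=
          tsum_mul_left
      _ ≤ (⨆ y, Φ y) * ∑' x : Σ n : ℕ, Fin (p ^ n), ‖g x.1 x.2‖ ^ 2 * ((p : ℝ) ^ x.1)⁻¹ :=
          mul_le_mul_of_nonneg_left htsum_h hS0
  · -- lower bound
    rintro M ⟨hM0, hM⟩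
    apply ciSup_le
    rintro ⟨n, k⟩
    set c : Fin p → ℂ := fun i =>
      φ (((k : ℕ) : ℤ_[p])) - φ ((((k : ℕ) + (i : ℕ) * p ^ n : ℕ)) : ℤ_[p]) with hc
    set g : ∀ m : ℕ, Fin (p ^ m) → ℂ := fun m j =>
      if m = n + 1 ∧ (j : ℕ) % p ^ n = (k : ℕ) then
        (starRingEnd ℂ) (φ (((k : ℕ) : ℤ_[p])) - φ (((j : ℕ) : ℤ_[p]))) else 0 with hgdef
    have hgval : ∀ i : Fin p, g (n + 1) (treeIdx p n k i) = (starRingEnd ℂ) (c i) := by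
      intro i
      have hmod : ((treeIdx p n k i : ℕ)) % p ^ n = (k : ℕ) := by
        show ((k : ℕ) + (i : ℕ) * p ^ n) % p ^ n = (k : ℕ)
        rw [Nat.add_mul_mod_self_right, Nat.mod_eq_of_lt k.2]
      show (if n + 1 = n + 1 ∧ ((treeIdx p n k i : ℕ)) % p ^ n = (k : ℕ) then
        (starRingEnd ℂ) (φ (((k : ℕ) : ℤ_[p])) - φ (((treeIdx p n k i : ℕ) : ℤ_[p]))) else 0) = _
      rw [if_pos ⟨rfl, hmod⟩]
      rfl
    have hgz1 : ∀ (m : ℕ) (j : Fin (p ^ m)), m ≠ n + 1 → g m j = 0 := by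
      intro m j hm
      simp only [hgdef]
      rw [if_neg]
      rintro ⟨h1, -⟩
      exact hm h1
    have hwg0 : ∀ y ∉ (Finset.univ.image fun j : Fin (p ^ (n + 1)) =>
        (⟨n + 1, j⟩ : Σ m : ℕ, Fin (p ^ m))),
        ‖g y.1 y.2‖ ^ 2 * ((p : ℝ) ^ y.1)⁻¹ = 0 := by
      rintro ⟨m, j⟩ hy
      have hm : m ≠ n + 1 := by
        intro h
        subst h
        exact hy (Finset.mem_image.mpr ⟨j, Finset.mem_univ _, rfl⟩)
      show ‖g m j‖ ^ 2 * ((p : ℝ) ^ m)⁻¹ = 0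
      rw [hgz1 m j hm]
      simp
    have hgs : Summable (fun y : Σ m : ℕ, Fin (p ^ m) =>
        ‖g y.1 y.2‖ ^ 2 * ((p : ℝ) ^ y.1)⁻¹) :=
      summable_of_ne_finset_zero hwg0
    have hkey := hM g hgs
    set A := ∑ i : Fin p, ‖c i‖ ^ 2 with hA
    have hA0 : 0 ≤ A := Finset.sum_nonneg fun i _ => by positivity
    -- compute the right-hand side
    have hmk_inj : Function.Injective (fun j : Fin (p ^ (n + 1)) =>
        (⟨n + 1, j⟩ : Σ m : ℕ, Fin (p ^ m))) := by
      intro a b h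
      exact eq_of_heq (Sigma.mk.inj_iff.mp h).2
    have hRHS : (∑' y : Σ m : ℕ, Fin (p ^ m), ‖g y.1 y.2‖ ^ 2 * ((p : ℝ) ^ y.1)⁻¹)
        = A * ((p : ℝ) ^ (n + 1))⁻¹ := by
      rw [tsum_eq_sum hwg0, Finset.sum_image (fun a _ b _ h => hmk_inj h)]
      show ∑ j : Fin (p ^ (n + 1)), ‖g (n + 1) j‖ ^ 2 * ((p : ℝ) ^ (n + 1))⁻¹ = _
      rw [← Finset.sum_mul]
      congr 1
      have hsub : ∑ j : Fin (p ^ (n + 1)), ‖g (n + 1) j‖ ^ 2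
          = ∑ j ∈ Finset.univ.image (fun i : Fin p => treeIdx p n k i), ‖g (n + 1) j‖ ^ 2 := by
        symm
        apply Finset.sum_subset (Finset.subset_univ _)
        intro j _ hj
        have hmod : (j : ℕ) % p ^ n ≠ (k : ℕ) := by
          intro hmod
          apply hj
          apply Finset.mem_image.mpr
          have hpn : 0 < p ^ n := Nat.pow_pos hp0
          refine ⟨⟨(j : ℕ) / p ^ n, ?_⟩, Finset.mem_univ _, ?_⟩
          · rw [Nat.div_lt_iff_lt_mul hpn]
            calc (j : ℕ) < p ^ (n + 1) := j.2
              _ = p * p ^ n := by ring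
          · apply Fin.ext
            show (k : ℕ) + ((j : ℕ) / p ^ n) * p ^ n = (j : ℕ)
            rw [← hmod]
            exact Nat.mod_add_div' (j : ℕ) (p ^ n)
        have hz : g (n + 1) j = 0 := by
          simp only [hgdef]
          rw [if_neg]
          rintro ⟨-, h2⟩
          exact hmod h2
        rw [hz]
        simp
      rw [hsub, Finset.sum_image (fun a _ b _ h => ((treeIdx_pair_inj hp0 h).2))]
      rw [hA]
      refine Finset.sum_congr rfl fun i _ => ?_
      rw [hgval i, RCLike.norm_conj]
    -- the left-hand side dominates the term at ⟨n, k⟩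
    have hT0 : ∀ y ∉ (Finset.univ.image fun k' : Fin (p ^ n) =>
        (⟨n, k'⟩ : Σ m : ℕ, Fin (p ^ m))),
        ‖((p : ℂ) ^ y.1 / (p : ℂ)) * ∑ i : Fin p,
            (φ (((y.2 : ℕ) : ℤ_[p])) - φ ((((y.2 : ℕ) + (i : ℕ) * p ^ y.1 : ℕ)) : ℤ_[p])) *
              g (y.1 + 1) (treeIdx p y.1 y.2 i)‖ ^ 2 * ((p : ℝ) ^ y.1)⁻¹ = 0 := by
      rintro ⟨m, k'⟩ hy
      have hm : m ≠ n := by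
        intro h
        subst h
        exact hy (Finset.mem_image.mpr ⟨k', Finset.mem_univ _, rfl⟩)
      have hz : ∀ i : Fin p, g (m + 1) (treeIdx p m k' i) = 0 :=
        fun i => hgz1 _ _ (by omega)
      show ‖((p : ℂ) ^ m / (p : ℂ)) * ∑ i : Fin p,
          (φ (((k' : ℕ) : ℤ_[p])) - φ ((((k' : ℕ) + (i : ℕ) * p ^ m : ℕ)) : ℤ_[p])) *
            g (m + 1) (treeIdx p m k' i)‖ ^ 2 * ((p : ℝ) ^ m)⁻¹ = 0
      simp [hz]
    have hTsum : Summable (fun y : Σ m : ℕ, Fin (p ^ m) =>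
        ‖((p : ℂ) ^ y.1 / (p : ℂ)) * ∑ i : Fin p,
            (φ (((y.2 : ℕ) : ℤ_[p])) - φ ((((y.2 : ℕ) + (i : ℕ) * p ^ y.1 : ℕ)) : ℤ_[p])) *
              g (y.1 + 1) (treeIdx p y.1 y.2 i)‖ ^ 2 * ((p : ℝ) ^ y.1)⁻¹) :=
      summable_of_ne_finset_zero hT0
    have hle : ‖((p : ℂ) ^ n / (p : ℂ)) * ∑ i : Fin p,
          c i * g (n + 1) (treeIdx p n k i)‖ ^ 2 * ((p : ℝ) ^ n)⁻¹
        ≤ ∑' y : Σ m : ℕ, Fin (p ^ m),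
          ‖((p : ℂ) ^ y.1 / (p : ℂ)) * ∑ i : Fin p,
              (φ (((y.2 : ℕ) : ℤ_[p])) - φ ((((y.2 : ℕ) + (i : ℕ) * p ^ y.1 : ℕ)) : ℤ_[p])) *
                g (y.1 + 1) (treeIdx p y.1 y.2 i)‖ ^ 2 * ((p : ℝ) ^ y.1)⁻¹ :=
      hTsum.le_tsum ⟨n, k⟩ (fun j _ => by positivity)
    have hterm0 : ‖((p : ℂ) ^ n / (p : ℂ)) * ∑ i : Fin p,
          c i * g (n + 1) (treeIdx p n k i)‖ ^ 2 * ((p : ℝ) ^ n)⁻¹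
        = ((p : ℝ) ^ n / p * A) ^ 2 * ((p : ℝ) ^ n)⁻¹ := by
      have h1 : ∑ i : Fin p, c i * g (n + 1) (treeIdx p n k i) = ((A : ℝ) : ℂ) := by
        have hpt : ∀ i : Fin p, c i * g (n + 1) (treeIdx p n k i) = ((‖c i‖ ^ 2 : ℝ) : ℂ) := by
          intro i
          rw [hgval i, Complex.mul_conj, Complex.normSq_eq_norm_sq]
        rw [Finset.sum_congr rfl (fun i _ => hpt i), hA]
        push_cast
        ring
      rw [h1, norm_mul, norm_div, norm_pow, Complex.norm_natCast, Complex.norm_real,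
        Real.norm_eq_abs, abs_of_nonneg hA0]
    have hchain : ((p : ℝ) ^ n / p * A) ^ 2 * ((p : ℝ) ^ n)⁻¹
        ≤ M * (A * ((p : ℝ) ^ (n + 1))⁻¹) := by
      calc ((p : ℝ) ^ n / p * A) ^ 2 * ((p : ℝ) ^ n)⁻¹
          = ‖((p : ℂ) ^ n / (p : ℂ)) * ∑ i : Fin p,
              c i * g (n + 1) (treeIdx p n k i)‖ ^ 2 * ((p : ℝ) ^ n)⁻¹ := hterm0.symm
        _ ≤ _ := hle
        _ ≤ M * ∑' y : Σ m : ℕ, Fin (p ^ m), ‖g y.1 y.2‖ ^ 2 * ((p : ℝ) ^ y.1)⁻¹ := hkey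
        _ = M * (A * ((p : ℝ) ^ (n + 1))⁻¹) := by rw [hRHS]
    -- final arithmetic
    rw [hΦdef]
    simp only
    rw [← Finset.sum_mul, ← hAconv n k]
    have hAeq : (∑ i : Fin p, ‖φ (((k : ℕ) : ℤ_[p])) -
        φ ((((k : ℕ) + (i : ℕ) * p ^ n : ℕ)) : ℤ_[p])‖ ^ 2) = A := rfl
    rw [hAeq]
    rcases eq_or_lt_of_le hA0 with hA0' | hA0'
    · rw [← hA0']
      simpa using hM0
    · have hP : (0 : ℝ) < (p : ℝ) ^ n := pow_pos hpR n
      have hP' : ((p : ℝ) ^ n) ≠ 0 := ne_of_gt hP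
      have hA' : A ≠ 0 := ne_of_gt hA0'
      have h2n : (p : ℝ) ^ (2 * n) = ((p : ℝ) ^ n) ^ 2 := by
        rw [pow_mul']
      have hsucc : (p : ℝ) ^ (n + 1) = (p : ℝ) ^ n * p := by
        rw [pow_succ]
      rw [h2n, inv_mul_le_iff₀ hpR]
      have h3 := mul_le_mul_of_nonneg_right hchain
        (le_of_lt (by positivity : (0 : ℝ) < (p : ℝ) ^ 2 * (p : ℝ) ^ n * A⁻¹))
      have lhs_eq : ((p : ℝ) ^ n / p * A) ^ 2 * ((p : ℝ) ^ n)⁻¹ *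
          ((p : ℝ) ^ 2 * (p : ℝ) ^ n * A⁻¹) = A * ((p : ℝ) ^ n) ^ 2 := by
        field_simp
      have rhs_eq : M * (A * ((p : ℝ) ^ (n + 1))⁻¹) *
          ((p : ℝ) ^ 2 * (p : ℝ) ^ n * A⁻¹) = (p : ℝ) * M := by
        rw [hsucc]
        field_simp
      rw [lhs_eq, rhs_eq] at h3
      exact h3
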